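/- The space of irrational numbers is h-homogeneous: every nonempty clopen subset of the space of irrational numbers, with the subspace topology, is homeomorphic to the space of irrational numbers. -/

import Mathlib

open Set

namespace IrrHH

variable {X : Type*} [TopologicalSpace X]

/-- A space partitioned into open pieces is homeomorphic to the sigma of the pieces. -/
noncomputable def partitionHomeo {ι : Type*} (P : ι → Set X)
    (ho : ∀ i, IsOpen (P i)) (hd : ∀ i j, i ≠ j → ∀ x, x ∈ P i → x ∉ P j)
    (hc : ∀ x, ∃ i, x ∈ P i) : X ≃ₜ Σ i, ↥(P i) := by
  have hbij : Function.Bijective (fun p : Σ i, ↥(P i) => (p.2 : X)) := by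
    constructor
    · rintro ⟨i, x, hx⟩ ⟨j, y, hy⟩ h
      dsimp at h
      subst h
      obtain rfl : i = j := by
        by_contra hij
        exact hd i j hij x hx hy
      rfl
    · intro x
      obtain ⟨i, hi⟩ := hc x
      exact ⟨⟨i, x, hi⟩, rfl⟩
  exact (Equiv.toHomeomorphOfContinuousOpen (Equiv.ofBijective _ hbij)
    (continuous_sigma fun i => continuous_subtype_val)
    (isOpenMap_sigma.2 fun i => (ho i).isOpenMap_subtype_val)).symm

/-- Flattening of a subtype of a subtype. -/
def flatten {s : Set X} (t : Set ↥s) (u : Set X)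
    (h : ∀ x : X, x ∈ u ↔ ∃ hx : x ∈ s, (⟨x, hx⟩ : ↥s) ∈ t) : ↥t ≃ₜ ↥u where
  toFun y := ⟨y.1.1, (h _).2 ⟨y.1.2, y.2⟩⟩
  invFun x := ⟨⟨x.1, ((h x.1).1 x.2).choose⟩, ((h x.1).1 x.2).choose_spec⟩
  left_inv y := Subtype.ext (Subtype.ext rfl)
  right_inv x := Subtype.ext rfl
  continuous_toFun := Continuous.subtype_mk (continuous_subtype_val.comp continuous_subtype_val) _
  continuous_invFun :=
    Continuous.subtype_mk (Continuous.subtype_mk continuous_subtype_val _) _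

def sigCongrRight {ι : Type*} {A B : ι → Type*} [∀ i, TopologicalSpace (A i)]
    [∀ i, TopologicalSpace (B i)] (F : ∀ i, A i ≃ₜ B i) : (Σ i, A i) ≃ₜ Σ i, B i where
  toFun p := ⟨p.1, F p.1 p.2⟩
  invFun p := ⟨p.1, (F p.1).symm p.2⟩
  left_inv := by rintro ⟨i, x⟩; simp
  right_inv := by rintro ⟨i, x⟩; simp
  continuous_toFun := continuous_sigma fun i => continuous_sigmaMk.comp (F i).continuous
  continuous_invFun := continuous_sigma fun i => continuous_sigmaMk.comp (F i).symm.continuous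

def sigCongrLeft {ι κ : Type*} (A : Type*) [TopologicalSpace A] (φ : ι ≃ κ) :
    (Σ _ : ι, A) ≃ₜ Σ _ : κ, A where
  toFun p := ⟨φ p.1, p.2⟩
  invFun p := ⟨φ.symm p.1, p.2⟩
  left_inv := by rintro ⟨i, x⟩; simp
  right_inv := by rintro ⟨i, x⟩; simp
  continuous_toFun := continuous_sigma fun i =>
    (continuous_sigmaMk : Continuous (@Sigma.mk κ (fun _ => A) (φ i)))
  continuous_invFun := continuous_sigma fun i =>
    (continuous_sigmaMk : Continuous (@Sigma.mk ι (fun _ => A) (φ.symm i)))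

def sigAssoc {ι κ : Type*} (A : Type*) [TopologicalSpace A] :
    (Σ _ : ι, Σ _ : κ, A) ≃ₜ Σ _ : ι × κ, A where
  toFun p := ⟨(p.1, p.2.1), p.2.2⟩
  invFun p := ⟨p.1.1, p.1.2, p.2⟩
  left_inv := by rintro ⟨i, k, x⟩; rfl
  right_inv := by rintro ⟨⟨i, k⟩, x⟩; rfl
  continuous_toFun := continuous_sigma fun i => continuous_sigma fun k =>
    (continuous_sigmaMk : Continuous (@Sigma.mk (ι × κ) (fun _ => A) (i, k)))
  continuous_invFun := continuous_sigma fun ik =>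
    ((continuous_sigmaMk : Continuous (@Sigma.mk ι (fun _ => Σ _ : κ, A) ik.1)).comp
      (continuous_sigmaMk : Continuous (@Sigma.mk κ (fun _ => A) ik.2)))


variable {A B : Set ℝ}

/-- Extension of an order iso between dense subsets of `ℝ` to all of `ℝ`, by suprema. -/
noncomputable def extFun (e : ↥A ≃o ↥B) (x : ℝ) : ℝ :=
  sSup ((fun a : ↥A => (e a : ℝ)) '' {a : ↥A | (a : ℝ) < x})

theorem dense_exists_lt (hA : Dense A) (x : ℝ) : ∃ a : ↥A, (a : ℝ) < x := by
  obtain ⟨c, hc, -, h2⟩ := hA.exists_between (show x - 1 < x by linarith)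
  exact ⟨⟨c, hc⟩, h2⟩

theorem dense_exists_gt (hA : Dense A) (x : ℝ) : ∃ a : ↥A, x < (a : ℝ) := by
  obtain ⟨c, hc, h1, -⟩ := hA.exists_between (show x < x + 1 by linarith)
  exact ⟨⟨c, hc⟩, h1⟩

theorem extFun_nonempty (e : ↥A ≃o ↥B) (hA : Dense A) (x : ℝ) :
    ((fun a : ↥A => (e a : ℝ)) '' {a : ↥A | (a : ℝ) < x}).Nonempty := by
  obtain ⟨a, ha⟩ := dense_exists_lt hA x
  exact ⟨_, ⟨a, ha, rfl⟩⟩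

theorem extFun_bddAbove (e : ↥A ≃o ↥B) (hA : Dense A) (x : ℝ) :
    BddAbove ((fun a : ↥A => (e a : ℝ)) '' {a : ↥A | (a : ℝ) < x}) := by
  obtain ⟨a', ha'⟩ := dense_exists_gt hA x
  refine ⟨(e a' : ℝ), ?_⟩
  rintro - ⟨a, ha, rfl⟩
  have : a < a' := Subtype.coe_lt_coe.1 (lt_trans ha ha')
  exact le_of_lt (Subtype.coe_lt_coe.2 (e.strictMono this))

theorem extFun_lt (e : ↥A ≃o ↥B) (hA : Dense A) {x : ℝ} {a : ↥A} (h : x < (a : ℝ)) :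
    extFun e x < (e a : ℝ) := by
  obtain ⟨c, hc, h1, h2⟩ := hA.exists_between h
  have hle : extFun e x ≤ (e ⟨c, hc⟩ : ℝ) := by
    refine csSup_le (extFun_nonempty e hA x) ?_
    rintro - ⟨p, hp, rfl⟩
    exact le_of_lt (Subtype.coe_lt_coe.2 (e.strictMono (Subtype.coe_lt_coe.1 (lt_trans hp h1))))
  exact lt_of_le_of_lt hle (Subtype.coe_lt_coe.2 (e.strictMono (Subtype.coe_lt_coe.1 h2)))

theorem lt_extFun (e : ↥A ≃o ↥B) (hA : Dense A) {x : ℝ} {a : ↥A} (h : (a : ℝ) < x) :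
    (e a : ℝ) < extFun e x := by
  obtain ⟨c, hc, h1, h2⟩ := hA.exists_between h
  have hmem : (e ⟨c, hc⟩ : ℝ) ∈ (fun a : ↥A => (e a : ℝ)) '' {a : ↥A | (a : ℝ) < x} :=
    ⟨⟨c, hc⟩, h2, rfl⟩
  have := le_csSup (extFun_bddAbove e hA x) hmem
  exact lt_of_lt_of_le (Subtype.coe_lt_coe.2 (e.strictMono (Subtype.coe_lt_coe.1 h1))) this

theorem extFun_strictMono (e : ↥A ≃o ↥B) (hA : Dense A) : StrictMono (extFun e) := by
  intro x y hxy
  obtain ⟨c, hc, h1, h2⟩ := hA.exists_between hxy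
  exact lt_trans (extFun_lt e hA (a := ⟨c, hc⟩) h1) (lt_extFun e hA (a := ⟨c, hc⟩) h2)

theorem extFun_extFun (e : ↥A ≃o ↥B) (hA : Dense A) (hB : Dense B) (x : ℝ) :
    extFun e.symm (extFun e x) = x := by
  refine le_antisymm ?_ ?_
  · refine csSup_le (extFun_nonempty e.symm hB _) ?_
    rintro - ⟨b, hb, rfl⟩
    have hb' : (b : ℝ) < extFun e x := hb
    obtain ⟨-, ⟨a, ha, rfl⟩, hba⟩ :=
      exists_lt_of_lt_csSup (extFun_nonempty e hA x) hb'
    have : b < e a := Subtype.coe_lt_coe.1 hba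
    have : e.symm b < a := by
      have := e.symm.strictMono this
      rwa [e.symm_apply_apply] at this
    exact le_of_lt (lt_trans (Subtype.coe_lt_coe.2 this) ha)
  · refine le_of_forall_lt fun z hz => ?_
    obtain ⟨c, hc, h1, h2⟩ := hA.exists_between hz
    have hlt : (e ⟨c, hc⟩ : ℝ) < extFun e x := lt_extFun e hA h2
    have hmem : ((e.symm (e ⟨c, hc⟩)) : ℝ) ∈
        (fun b : ↥B => ((e.symm b : ↥A) : ℝ)) '' {b : ↥B | (b : ℝ) < extFun e x} :=
      ⟨e ⟨c, hc⟩, hlt, rfl⟩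
    have := le_csSup (extFun_bddAbove e.symm hB (extFun e x)) hmem
    rw [e.symm_apply_apply] at this
    exact lt_of_lt_of_le h1 this

theorem extFun_not_mem (e : ↥A ≃o ↥B) (hA : Dense A) (hB : Dense B) {x : ℝ} (hx : x ∉ A) :
    extFun e x ∉ B := by
  intro hxB
  set b : ↥B := ⟨extFun e x, hxB⟩ with hbdef
  rcases lt_trichotomy ((e.symm b : ↥A) : ℝ) x with h | h | h
  · have := lt_extFun e hA h
    rw [e.apply_symm_apply] at this
    exact lt_irrefl _ this
  · exact hx (h ▸ (e.symm b).2)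
  · have := extFun_lt e hA h
    rw [e.apply_symm_apply] at this
    exact lt_irrefl _ this

/-- Complements of countable dense subsets of `ℝ` are homeomorphic. -/
theorem complCountableDenseHomeo (hA : Dense A) (hB : Dense B)
    (hAc : A.Countable) (hBc : B.Countable) :
    Nonempty ({x : ℝ // x ∉ A} ≃ₜ {x : ℝ // x ∉ B}) := by
  haveI := hAc.to_subtype
  haveI := hBc.to_subtype
  haveI : Nonempty ↥A := (dense_exists_lt hA 0).elim fun a _ => ⟨a⟩
  haveI : Nonempty ↥B := (dense_exists_lt hB 0).elim fun a _ => ⟨a⟩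
  haveI : DenselyOrdered ↥A := ⟨fun a b h => by
    obtain ⟨c, hc, h1, h2⟩ := hA.exists_between (Subtype.coe_lt_coe.2 h)
    exact ⟨⟨c, hc⟩, Subtype.coe_lt_coe.1 h1, Subtype.coe_lt_coe.1 h2⟩⟩
  haveI : DenselyOrdered ↥B := ⟨fun a b h => by
    obtain ⟨c, hc, h1, h2⟩ := hB.exists_between (Subtype.coe_lt_coe.2 h)
    exact ⟨⟨c, hc⟩, Subtype.coe_lt_coe.1 h1, Subtype.coe_lt_coe.1 h2⟩⟩
  haveI : NoMinOrder ↥A := ⟨fun a => by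
    obtain ⟨c, hc⟩ := dense_exists_lt hA a
    exact ⟨c, Subtype.coe_lt_coe.1 hc⟩⟩
  haveI : NoMinOrder ↥B := ⟨fun a => by
    obtain ⟨c, hc⟩ := dense_exists_lt hB a
    exact ⟨c, Subtype.coe_lt_coe.1 hc⟩⟩
  haveI : NoMaxOrder ↥A := ⟨fun a => by
    obtain ⟨c, hc⟩ := dense_exists_gt hA a
    exact ⟨c, Subtype.coe_lt_coe.1 hc⟩⟩
  haveI : NoMaxOrder ↥B := ⟨fun a => by
    obtain ⟨c, hc⟩ := dense_exists_gt hB a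
    exact ⟨c, Subtype.coe_lt_coe.1 hc⟩⟩
  obtain ⟨e⟩ := Order.iso_of_countable_dense ↥A ↥B
  set E : ℝ ≃o ℝ := StrictMono.orderIsoOfRightInverse _ (extFun_strictMono e hA) (extFun e.symm)
      (fun x => by
        have := extFun_extFun e.symm hB hA x
        rwa [OrderIso.symm_symm] at this) with hE
  have hEapp : ∀ x, E x = extFun e x := fun x => rfl
  have himg : (E.toHomeomorph) '' {x : ℝ | x ∉ A} = {x : ℝ | x ∉ B} := by
    ext y
    constructor
    · rintro ⟨x, hx, rfl⟩
      exact extFun_not_mem e hA hB hx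
    · intro hy
      refine ⟨extFun e.symm y, ?_, ?_⟩
      · exact extFun_not_mem e.symm hB hA hy
      · show E _ = y
        rw [hEapp]
        have := extFun_extFun e.symm hB hA y
        rwa [OrderIso.symm_symm] at this
  exact ⟨((E.toHomeomorph).image {x : ℝ | x ∉ A}).trans (Homeomorph.setCongr himg)⟩

noncomputable def affIoo {p q : ℝ} (hpq : p < q) : ↥(Ioo (-1 : ℝ) 1) ≃o ↥(Ioo p q) := by
  have hqp : (0:ℝ) < q - p := by linarith
  refine StrictMono.orderIsoOfRightInverse
    (fun x => ⟨p + (q - p) * ((x : ℝ) + 1) / 2, ?_, ?_⟩) ?_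
    (fun y => ⟨2 * ((y : ℝ) - p) / (q - p) - 1, ?_, ?_⟩) ?_
  · have := x.2.1
    nlinarith
  · have := x.2.2
    nlinarith
  · intro x y hxy
    have : (x : ℝ) < y := hxy
    show p + (q - p) * ((x : ℝ) + 1) / 2 < p + (q - p) * ((y : ℝ) + 1) / 2
    nlinarith
  · have := y.2.1
    have h1 : (0:ℝ) < 2 * ((y : ℝ) - p) / (q - p) := div_pos (by linarith) hqp
    linarith
  · have := y.2.2
    have h1 : 2 * ((y : ℝ) - p) / (q - p) < 2 := by
      rw [div_lt_iff₀ hqp]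
      nlinarith
    linarith
  · intro y
    apply Subtype.ext
    show p + (q - p) * ((2 * ((y : ℝ) - p) / (q - p) - 1) + 1) / 2 = (y : ℝ)
    field_simp
    ring

/-- The set of irrationals in any open interval is homeomorphic to all irrationals. -/
theorem intervalIrrationalHomeo {p q : ℝ} (hpq : p < q) :
    Nonempty ({x : ℝ // Irrational x ∧ x ∈ Ioo p q} ≃ₜ {x : ℝ // Irrational x}) := by
  let w : ℝ ≃o ↥(Ioo p q) := (orderIsoIooNegOneOne ℝ).trans (affIoo hpq)
  let hw : ℝ ≃ₜ ↥(Ioo p q) := w.toHomeomorph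
  have hwapp : ∀ x, (hw x : ℝ) = (w x : ℝ) := fun _ => rfl
  set D : Set ℝ := (fun x : ℝ => (w x : ℝ)) ⁻¹' (range ((↑) : ℚ → ℝ)) with hD
  have hDc : D.Countable := by
    refine Set.Countable.preimage ?_ ?_ (s := range ((↑) : ℚ → ℝ))
    · exact countable_range _
    · exact Subtype.val_injective.comp w.injective
  have hDd : Dense D := by
    rw [dense_iff_exists_between]
    intro a b hab
    have hwab : (w a : ℝ) < (w b : ℝ) := Subtype.coe_lt_coe.2 (w.strictMono hab)
    obtain ⟨r, hr1, hr2⟩ := exists_rat_btwn hwab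
    have hrIoo : (r : ℝ) ∈ Ioo p q := ⟨lt_trans (w a).2.1 hr1, lt_trans hr2 (w b).2.2⟩
    refine ⟨w.symm ⟨r, hrIoo⟩, ?_, ?_, ?_⟩
    · show (w (w.symm ⟨r, hrIoo⟩) : ℝ) ∈ range ((↑) : ℚ → ℝ)
      rw [w.apply_symm_apply]
      exact ⟨r, rfl⟩
    · have : w a < ⟨r, hrIoo⟩ := Subtype.coe_lt_coe.1 hr1
      have := w.symm.strictMono this
      rwa [w.symm_apply_apply] at this
    · have : (⟨r, hrIoo⟩ : ↥(Ioo p q)) < w b := Subtype.coe_lt_coe.1 hr2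
      have := w.symm.strictMono this
      rwa [w.symm_apply_apply] at this
  obtain ⟨h1⟩ := complCountableDenseHomeo hDd Rat.denseRange_cast hDc (countable_range _)
  have h2 : {x : ℝ // x ∉ range ((↑) : ℚ → ℝ)} ≃ₜ {x : ℝ // Irrational x} :=
    Homeomorph.setCongr rfl
  have h3 : ↥(hw '' Dᶜ) ≃ₜ {x : ℝ // Irrational x ∧ x ∈ Ioo p q} := by
    refine flatten (s := Ioo p q) (hw '' Dᶜ) {x : ℝ | Irrational x ∧ x ∈ Ioo p q} ?_
    intro x
    constructor
    · rintro ⟨hirr, hxIoo⟩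
      refine ⟨hxIoo, w.symm ⟨x, hxIoo⟩, ?_, ?_⟩
      · show w.symm ⟨x, hxIoo⟩ ∉ D
        intro hmem
        rw [hD, mem_preimage, w.apply_symm_apply] at hmem
        exact hirr hmem
      · show hw _ = _
        have : hw (w.symm ⟨x, hxIoo⟩) = w (w.symm ⟨x, hxIoo⟩) := rfl
        rw [this, w.apply_symm_apply]
    · rintro ⟨hx, d, hd, hdx⟩
      refine ⟨?_, hx⟩
      have : (w d : ℝ) = x := by
        have h4 : hw d = ⟨x, hx⟩ := hdx
        have : hw d = w d := rfl
        rw [this] at h4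
        exact congrArg Subtype.val h4
      intro hrat
      exact hd (by rw [hD, mem_preimage, this]; exact hrat)
  have h4 : {x : ℝ // x ∉ D} ≃ₜ ↥(hw '' Dᶜ) := by
    have : ↥Dᶜ ≃ₜ ↥(hw '' Dᶜ) := hw.image Dᶜ
    exact this
  exact ⟨((h3.symm.trans h4.symm).trans h1).trans h2⟩


/-- Dyadic interval. -/
def Iv (n : ℕ) (k : ℤ) : Set ℝ := Ioo ((k : ℝ) / 2 ^ n) (((k : ℝ) + 1) / 2 ^ n)

theorem irrational_mul_two_pow {x : ℝ} (hx : Irrational x) (n : ℕ) :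
    Irrational (x * 2 ^ n) := by
  have h := hx.mul_intCast (m := 2 ^ n) (by positivity)
  have : (((2 : ℤ) ^ n : ℤ) : ℝ) = (2 : ℝ) ^ n := by push_cast; ring
  rwa [this] at h

theorem mem_Iv_floor {x : ℝ} (hx : Irrational x) (n : ℕ) : x ∈ Iv n ⌊x * 2 ^ n⌋ := by
  have h2 : (0:ℝ) < 2 ^ n := by positivity
  have hxi := irrational_mul_two_pow hx n
  constructor
  · rw [div_lt_iff₀ h2]
    exact lt_of_le_of_ne (Int.floor_le _) (Ne.symm (hxi.ne_int _))
  · rw [lt_div_iff₀ h2]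
    have := Int.lt_floor_add_one (x * 2 ^ n)
    push_cast at this ⊢
    linarith
theorem Iv_forces {x : ℝ} {n : ℕ} {k : ℤ} (h : x ∈ Iv n k) : ⌊x * 2 ^ n⌋ = k := by
  have h2 : (0:ℝ) < 2 ^ n := by positivity
  obtain ⟨h1', h2'⟩ := h
  rw [Int.floor_eq_iff]
  constructor
  · exact le_of_lt ((div_lt_iff₀ h2).1 h1')
  · have := (lt_div_iff₀ h2).1 h2'
    push_cast at this ⊢
    linarith

theorem Iv_subset {x : ℝ} {n n' : ℕ} {k k' : ℤ} (hnn : n ≤ n')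
    (h1 : x ∈ Iv n k) (h2 : x ∈ Iv n' k') : Iv n' k' ⊆ Iv n k := by
  obtain ⟨m, rfl⟩ := Nat.exists_eq_add_of_le hnn
  have hp : (0:ℝ) < 2 ^ n := by positivity
  have hp' : (0:ℝ) < 2 ^ (n + m) := by positivity
  have hm : (0:ℝ) < 2 ^ m := by positivity
  have hpow : (2:ℝ) ^ (n + m) = 2 ^ n * 2 ^ m := pow_add 2 n m
  obtain ⟨ha1, ha2⟩ := h1
  obtain ⟨hb1, hb2⟩ := h2
  -- k * 2^m ≤ k' over the reals
  have fact1 : (k : ℝ) * 2 ^ m ≤ (k' : ℝ) := by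
    by_contra hcon
    push_neg at hcon
    have : (k' : ℤ) < k * 2 ^ m := by exact_mod_cast (by push_cast; linarith : (k' : ℝ) < (k : ℝ) * 2 ^ m)
    have : (k' : ℝ) + 1 ≤ (k : ℝ) * 2 ^ m := by exact_mod_cast Int.add_one_le_of_lt this
    -- then x < (k'+1)/2^(n+m) ≤ k*2^m/2^(n+m) = k/2^n < x
    have hle : ((k' : ℝ) + 1) / 2 ^ (n + m) ≤ (k : ℝ) / 2 ^ n := by
      rw [div_le_div_iff₀ hp' hp, hpow]
      nlinarith
    linarith
  have fact2 : (k' : ℝ) + 1 ≤ ((k : ℝ) + 1) * 2 ^ m := by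
    by_contra hcon
    push_neg at hcon
    have : ((k : ℝ) + 1) * 2 ^ m < (k' : ℝ) + 1 := hcon
    have hint : ((k : ℤ) + 1) * 2 ^ m < k' + 1 := by
      exact_mod_cast (by push_cast; linarith : ((k : ℝ) + 1) * 2 ^ m < (k' : ℝ) + 1)
    have : ((k : ℤ) + 1) * 2 ^ m ≤ k' := Int.lt_add_one_iff.1 hint
    have hre : ((k : ℝ) + 1) * 2 ^ m ≤ (k' : ℝ) := by exact_mod_cast this
    -- then x < (k+1)/2^n ≤ k'/2^(n+m) < x
    have hle : ((k : ℝ) + 1) / 2 ^ n ≤ (k' : ℝ) / 2 ^ (n + m) := by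
      rw [div_le_div_iff₀ hp hp', hpow]
      nlinarith
    linarith
  intro z hz
  obtain ⟨hz1, hz2⟩ := hz
  constructor
  · have : (k : ℝ) / 2 ^ n ≤ (k' : ℝ) / 2 ^ (n + m) := by
      rw [div_le_div_iff₀ hp hp', hpow]
      nlinarith
    linarith
  · have : ((k' : ℝ) + 1) / 2 ^ (n + m) ≤ ((k : ℝ) + 1) / 2 ^ n := by
      rw [div_le_div_iff₀ hp' hp, hpow]
      nlinarith
    linarith


theorem open_homeo (U : Set {x : ℝ // Irrational x}) (hUo : IsOpen U) (hne : U.Nonempty) :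
    Nonempty (↥U ≃ₜ {x : ℝ // Irrational x}) := by
  classical
  set Irr : Set ℝ := {x : ℝ | Irrational x} with hIrr
  -- `Good n k` : the irrationals of the dyadic interval `Iv n k` are inside `U`
  set Good : ℕ → ℤ → Prop := fun n k => ∀ y : {x : ℝ // Irrational x}, (y : ℝ) ∈ Iv n k → y ∈ U
    with hGoodDef
  have hcov : ∀ y : ↥U, ∃ n : ℕ, Good n ⌊(y.1 : ℝ) * 2 ^ n⌋ := by
    intro y
    obtain ⟨ε, hε, hball⟩ := Metric.isOpen_iff.1 hUo y.1 y.2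
    obtain ⟨n, hn⟩ := exists_pow_lt_of_lt_one hε (by norm_num : (1:ℝ)/2 < 1)
    have hn' : 1 / (2:ℝ) ^ n < ε := by rwa [div_pow, one_pow] at hn
    have h2 : (0:ℝ) < 2 ^ n := by positivity
    refine ⟨n, fun z hz => hball ?_⟩
    have hy := mem_Iv_floor y.1.2 n
    rw [Metric.mem_ball, Subtype.dist_eq, Real.dist_eq]
    have key : (((⌊(y.1 : ℝ) * 2 ^ n⌋ : ℤ) : ℝ) + 1) / 2 ^ n
        - ((⌊(y.1 : ℝ) * 2 ^ n⌋ : ℤ) : ℝ) / 2 ^ n = 1 / 2 ^ n := by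
      field_simp
      ring
    obtain ⟨hz1, hz2⟩ := hz
    obtain ⟨hy1, hy2⟩ := hy
    rw [abs_sub_lt_iff]
    constructor <;> linarith
  set N : ↥U → ℕ := fun y => Nat.find (hcov y) with hN
  set K : ↥U → ℤ := fun y => ⌊(y.1 : ℝ) * 2 ^ (N y)⌋ with hK
  have hGood : ∀ y : ↥U, Good (N y) (K y) := fun y => Nat.find_spec (hcov y)
  have hmin : ∀ (y : ↥U) (m : ℕ), m < N y → ¬Good m ⌊(y.1 : ℝ) * 2 ^ m⌋ := fun y m hm =>
    Nat.find_min (hcov y) hm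
  have hown : ∀ y : ↥U, (y.1 : ℝ) ∈ Iv (N y) (K y) := fun y => mem_Iv_floor y.1.2 (N y)
  set S : Set (ℕ × ℤ) := {s | ∃ y : ↥U, (N y, K y) = s} with hS
  have hSGood : ∀ s : ↥S, Good s.1.1 s.1.2 := by
    rintro ⟨s, y, rfl⟩
    exact hGood y
  set P : ↥S → Set ↥U := fun s => {y : ↥U | (y.1 : ℝ) ∈ Iv s.1.1 s.1.2} with hP
  have ho : ∀ s, IsOpen (P s) := by
    intro s
    exact isOpen_Ioo.preimage (continuous_subtype_val.comp continuous_subtype_val)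
  -- disjointness
  have hdisj : ∀ s t : ↥S, s ≠ t → ∀ y : ↥U, y ∈ P s → y ∉ P t := by
    have aux : ∀ (n : ℕ) (k : ℤ), Good n k → ∀ t : ↥S, n < t.1.1 →
        ∀ y : ↥U, (y.1 : ℝ) ∈ Iv n k → (y.1 : ℝ) ∈ Iv t.1.1 t.1.2 → False := by
      rintro n k hgood ⟨t, y', rfl⟩ hnt y hy1 hy2
      have hsub : Iv (N y') (K y') ⊆ Iv n k := Iv_subset (le_of_lt hnt) hy1 hy2
      have h3 : (y'.1 : ℝ) ∈ Iv n k := hsub (hown y')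
      have h4 : ⌊(y'.1 : ℝ) * 2 ^ n⌋ = k := Iv_forces h3
      exact hmin y' n hnt (h4 ▸ hgood)
    intro s t hst y hys hyt
    rcases lt_trichotomy s.1.1 t.1.1 with h | h | h
    · exact aux s.1.1 s.1.2 (hSGood s) t h y hys hyt
    · apply hst
      apply Subtype.ext
      have h1 : ⌊(y.1 : ℝ) * 2 ^ s.1.1⌋ = s.1.2 := Iv_forces hys
      have h2 : ⌊(y.1 : ℝ) * 2 ^ t.1.1⌋ = t.1.2 := Iv_forces hyt
      have : s.1.1 = t.1.1 := h
      exact Prod.ext this (by rw [← h1, ← h2, this])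
    · exact aux t.1.1 t.1.2 (hSGood t) s h y hyt hys
  have hcover : ∀ y : ↥U, ∃ s : ↥S, y ∈ P s := fun y =>
    ⟨⟨(N y, K y), y, rfl⟩, hown y⟩
  -- the partition homeomorphism
  have homeo1 : ↥U ≃ₜ Σ s : ↥S, ↥(P s) := partitionHomeo P ho hdisj hcover
  -- each piece is homeomorphic to the irrationals
  have hFs : ∀ s : ↥S, Nonempty (↥(P s) ≃ₜ {x : ℝ // Irrational x}) := by
    intro s
    obtain ⟨⟨n, k⟩, hsS⟩ := s
    have h2 : (0:ℝ) < 2 ^ n := by positivity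
    have hlt : (k : ℝ) / 2 ^ n < ((k : ℝ) + 1) / 2 ^ n := by
      rw [div_lt_div_iff₀ h2 h2]
      nlinarith
    have f1 : ↥(P ⟨(n, k), hsS⟩) ≃ₜ ↥{y : {x : ℝ // Irrational x} | (y : ℝ) ∈ Iv n k} := by
      refine flatten (s := U) _ _ ?_
      intro y
      constructor
      · intro hy
        exact ⟨hSGood ⟨(n, k), hsS⟩ y hy, hy⟩
      · rintro ⟨hy, h⟩
        exact h
    have f2 : ↥{y : {x : ℝ // Irrational x} | (y : ℝ) ∈ Iv n k} ≃ₜ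
        ↥{x : ℝ | Irrational x ∧ x ∈ Ioo ((k : ℝ) / 2 ^ n) (((k : ℝ) + 1) / 2 ^ n)} := by
      refine flatten (s := {x : ℝ | Irrational x}) _ _ ?_
      intro x
      constructor
      · rintro ⟨h1, h2⟩
        exact ⟨h1, h2⟩
      · rintro ⟨h1, h2⟩
        exact ⟨h1, h2⟩
    obtain ⟨f3⟩ := intervalIrrationalHomeo hlt
    exact ⟨(f1.trans f2).trans f3⟩
  let F : ∀ s : ↥S, ↥(P s) ≃ₜ {x : ℝ // Irrational x} := fun s => (hFs s).some
  -- the irrationals are homeomorphic to a `ℤ`-indexed sigma of irrationals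
  have hρ : Nonempty ({x : ℝ // Irrational x} ≃ₜ Σ _ : ℤ, {x : ℝ // Irrational x}) := by
    set Q : ℤ → Set {x : ℝ // Irrational x} :=
      fun k => {y | (y : ℝ) ∈ Ioo (k : ℝ) ((k : ℝ) + 1)} with hQ
    have hQo : ∀ k, IsOpen (Q k) := fun k => isOpen_Ioo.preimage continuous_subtype_val
    have hQd : ∀ k l, k ≠ l → ∀ y, y ∈ Q k → y ∉ Q l := by
      intro k l hkl y hyk hyl
      apply hkl
      have h1 : ⌊(y : ℝ)⌋ = k := by
        rw [Int.floor_eq_iff]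
        exact ⟨le_of_lt hyk.1, by push_cast; exact hyk.2⟩
      have h2 : ⌊(y : ℝ)⌋ = l := by
        rw [Int.floor_eq_iff]
        exact ⟨le_of_lt hyl.1, by push_cast; exact hyl.2⟩
      rw [← h1, ← h2]
    have hQc : ∀ y, ∃ k, y ∈ Q k := by
      intro y
      refine ⟨⌊(y : ℝ)⌋, ?_, ?_⟩
      · exact lt_of_le_of_ne (Int.floor_le _) (Ne.symm (y.2.ne_int _))
      · push_cast
        exact Int.lt_floor_add_one _
    have homeoQ : {x : ℝ // Irrational x} ≃ₜ Σ k : ℤ, ↥(Q k) := partitionHomeo Q hQo hQd hQc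
    have hGk : ∀ k : ℤ, Nonempty (↥(Q k) ≃ₜ {x : ℝ // Irrational x}) := by
      intro k
      have hlt : (k : ℝ) < (k : ℝ) + 1 := by linarith
      have g1 : ↥(Q k) ≃ₜ ↥{x : ℝ | Irrational x ∧ x ∈ Ioo (k : ℝ) ((k : ℝ) + 1)} := by
        refine flatten (s := {x : ℝ | Irrational x}) _ _ ?_
        intro x
        constructor
        · rintro ⟨h1, h2⟩
          exact ⟨h1, h2⟩
        · rintro ⟨h1, h2⟩
          exact ⟨h1, h2⟩
      obtain ⟨g2⟩ := intervalIrrationalHomeo hlt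
      exact ⟨g1.trans g2⟩
    exact ⟨homeoQ.trans (sigCongrRight fun k => (hGk k).some)⟩
  obtain ⟨ρ⟩ := hρ
  -- index arithmetic : `↥S × ℤ ≃ ℤ`
  haveI : Nonempty ↥S := by
    obtain ⟨y₀, hy₀⟩ := hne
    exact ⟨⟨(N ⟨y₀, hy₀⟩, K ⟨y₀, hy₀⟩), ⟨y₀, hy₀⟩, rfl⟩⟩
  haveI : Infinite (↥S × ℤ) := Prod.infinite_of_right
  have eqv : ↥S × ℤ ≃ ℤ := Nonempty.some nonempty_equiv_of_countable
  -- assemble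
  refine ⟨((((homeo1.trans (sigCongrRight F)).trans
      (sigCongrRight fun _ => ρ)).trans
      (sigAssoc {x : ℝ // Irrational x})).trans
      (sigCongrLeft {x : ℝ // Irrational x} eqv)).trans ρ.symm⟩

end IrrHH

/-- The space of irrational numbers is h-homogeneous: every nonempty clopen
subset of `{x : ℝ | Irrational x}`, with the subspace topology, is
homeomorphic to the space of irrational numbers. -/
theorem irrational_hHomogeneous (U : Set {x : ℝ // Irrational x})
    (hU : IsClopen U) (hne : U.Nonempty) :
    Nonempty (↥U ≃ₜ {x : ℝ // Irrational x}) := by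
  exact IrrHH.open_homeo U hU.isOpen hne
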